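/- (Ill-conditioning under scaling) Let a > 0, suppose W1 is invertible (so σ_min(W1) > 0), and suppose the Hessian of ℓ at the scaled point (a⁻¹ W1, a W2) is positive definite, i.e., λ_min(a⁻¹ W1, a W2) > 0. Then the condition number of this Hessian satisfies λ_max(a⁻¹ W1, a W2) / λ_min(a⁻¹ W1, a W2) ≥ a⁴ · σ_max(W2)² / σ_min(W1)². In particular, the condition number grows at least as a⁴. -/

import Mathlib

open Matrix

/-- Squared Frobenius norm. -/
def froSq {d : ℕ} (A : Matrix (Fin d) (Fin d) ℝ) : ℝ :=
  ∑ i, ∑ j, (A i j) ^ 2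

/-- The matrix-factorization loss ℓ(A, B) = ‖A B − M‖_F². -/
def loss {d : ℕ} (M A B : Matrix (Fin d) (Fin d) ℝ) : ℝ :=
  froSq (A * B - M)

/-- The Hessian quadratic form of ℓ at `(A, B)` in direction `(E1, E2)`:
`Q_{(A,B)}(E1, E2) = (d²/dt²)|_{t=0} ℓ(A + t E1, B + t E2)`. -/
noncomputable def hessQ {d : ℕ} (M A B E1 E2 : Matrix (Fin d) (Fin d) ℝ) : ℝ :=
  iteratedDeriv 2 (fun t : ℝ => loss M (A + t • E1) (B + t • E2)) 0

/-- Largest Rayleigh value of the Hessian of ℓ at `(A, B)`. -/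
noncomputable def lamMax {d : ℕ} (M A B : Matrix (Fin d) (Fin d) ℝ) : ℝ :=
  sSup {q : ℝ | ∃ E1 E2 : Matrix (Fin d) (Fin d) ℝ,
    froSq E1 + froSq E2 = 1 ∧ q = hessQ M A B E1 E2}

/-- Smallest Rayleigh value of the Hessian of ℓ at `(A, B)`. -/
noncomputable def lamMin {d : ℕ} (M A B : Matrix (Fin d) (Fin d) ℝ) : ℝ :=
  sInf {q : ℝ | ∃ E1 E2 : Matrix (Fin d) (Fin d) ℝ,
    froSq E1 + froSq E2 = 1 ∧ q = hessQ M A B E1 E2}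

/-- Euclidean (ℓ₂) norm of a vector in ℝ^d. -/
noncomputable def euclNorm {d : ℕ} (x : Fin d → ℝ) : ℝ :=
  Real.sqrt (∑ i, (x i) ^ 2)

/-- The largest singular value of `W`: `sup_{‖x‖₂ = 1} ‖W x‖₂`. -/
noncomputable def sigmaMax {d : ℕ} (W : Matrix (Fin d) (Fin d) ℝ) : ℝ :=
  sSup {y : ℝ | ∃ x : Fin d → ℝ, euclNorm x = 1 ∧ y = euclNorm (W.mulVec x)}

/-- The smallest singular value of `W`: `min_{‖x‖₂ = 1} ‖W x‖₂`. -/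
noncomputable def sigmaMin {d : ℕ} (W : Matrix (Fin d) (Fin d) ℝ) : ℝ :=
  sInf {y : ℝ | ∃ x : Fin d → ℝ, euclNorm x = 1 ∧ y = euclNorm (W.mulVec x)}

-- aux
def ip {d : ℕ} (A B : Matrix (Fin d) (Fin d) ℝ) : ℝ := ∑ i, ∑ j, A i j * B i j

def outerM {d : ℕ} (x u : Fin d → ℝ) : Matrix (Fin d) (Fin d) ℝ :=
  Matrix.of fun i j => x i * u j

lemma froSq_nonneg {d : ℕ} (A : Matrix (Fin d) (Fin d) ℝ) : 0 ≤ froSq A := by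
  unfold froSq; positivity

lemma froSq_mul_le {d : ℕ} (A B : Matrix (Fin d) (Fin d) ℝ) :
    froSq (A * B) ≤ froSq A * froSq B := by
  simp only [froSq, Matrix.mul_apply]
  calc ∑ i, ∑ j, (∑ k, A i k * B k j)^2
      ≤ ∑ i, ∑ j, (∑ k, (A i k)^2) * (∑ k, (B k j)^2) :=
        Finset.sum_le_sum fun i _ => Finset.sum_le_sum fun j _ =>
          Finset.sum_mul_sq_le_sq_mul_sq _ _ _
    _ = (∑ i, ∑ k, (A i k)^2) * (∑ j, ∑ k, (B k j)^2) := by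
        rw [Finset.sum_mul_sum]
    _ = (∑ i, ∑ k, (A i k)^2) * (∑ k, ∑ j, (B k j)^2) := by
        congr 1; exact Finset.sum_comm

lemma froSq_add_le {d : ℕ} (X Y : Matrix (Fin d) (Fin d) ℝ) :
    froSq (X + Y) ≤ 2 * (froSq X + froSq Y) := by
  simp only [froSq, Matrix.add_apply]
  have h : ∀ i j : Fin d, (X i j + Y i j)^2 ≤ 2*(X i j)^2 + 2*(Y i j)^2 :=
    fun i j => by nlinarith [sq_nonneg (X i j - Y i j)]
  calc ∑ i, ∑ j, (X i j + Y i j)^2 ≤ ∑ i, ∑ j, (2*(X i j)^2 + 2*(Y i j)^2) :=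
        Finset.sum_le_sum fun i _ => Finset.sum_le_sum fun j _ => h i j
    _ = 2 * ((∑ i, ∑ j, (X i j)^2) + ∑ i, ∑ j, (Y i j)^2) := by
        simp only [Finset.sum_add_distrib, ← Finset.mul_sum]; ring

lemma abs_ip_le {d : ℕ} (A B : Matrix (Fin d) (Fin d) ℝ) :
    2 * |ip A B| ≤ froSq A + froSq B := by
  simp only [ip, froSq]
  have h : ∀ i j : Fin d, 2 * |A i j * B i j| ≤ (A i j)^2 + (B i j)^2 := fun i j => by
    have := sq_nonneg (|A i j| - |B i j|)
    have h2 : |A i j * B i j| = |A i j| * |B i j| := abs_mul _ _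
    nlinarith [sq_abs (A i j), sq_abs (B i j)]
  have h1 : |∑ i, ∑ j, A i j * B i j| ≤ ∑ i, ∑ j, |A i j * B i j| :=
    (Finset.abs_sum_le_sum_abs _ _).trans
      (Finset.sum_le_sum fun i _ => Finset.abs_sum_le_sum_abs _ _)
  calc 2 * |∑ i, ∑ j, A i j * B i j| ≤ 2 * ∑ i, ∑ j, |A i j * B i j| := by linarith
    _ = ∑ i, ∑ j, 2 * |A i j * B i j| := by simp only [Finset.mul_sum]
    _ ≤ ∑ i, ∑ j, ((A i j)^2 + (B i j)^2) :=
        Finset.sum_le_sum fun i _ => Finset.sum_le_sum fun j _ => h i j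
    _ = (∑ i, ∑ j, (A i j)^2) + ∑ i, ∑ j, (B i j)^2 := by
        simp only [Finset.sum_add_distrib]

lemma ip_zero {d : ℕ} (A : Matrix (Fin d) (Fin d) ℝ) : ip A 0 = 0 := by simp [ip]

lemma froSq_smul {d : ℕ} (c : ℝ) (A : Matrix (Fin d) (Fin d) ℝ) :
    froSq (c • A) = c^2 * froSq A := by
  simp [froSq, mul_pow, Finset.mul_sum]

lemma froSq_outer {d : ℕ} (x u : Fin d → ℝ) :
    froSq (outerM x u) = (∑ i, (x i)^2) * (∑ j, (u j)^2) := by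
  rw [Finset.sum_mul_sum]
  simp [froSq, outerM, mul_pow]

lemma mul_outer {d : ℕ} (A : Matrix (Fin d) (Fin d) ℝ) (x u : Fin d → ℝ) :
    A * outerM x u = outerM (A.mulVec x) u := by
  ext i j
  simp only [Matrix.mul_apply, outerM, Matrix.of_apply, Matrix.mulVec, dotProduct,
    Finset.sum_mul]
  exact Finset.sum_congr rfl fun k _ => by ring

lemma outer_mul {d : ℕ} (W : Matrix (Fin d) (Fin d) ℝ) (u w : Fin d → ℝ) :
    outerM u w * W = outerM u (Matrix.vecMul w W) := by
  ext i j
  simp only [Matrix.mul_apply, outerM, Matrix.of_apply, Matrix.vecMul, dotProduct,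
    Finset.mul_sum]
  exact Finset.sum_congr rfl fun k _ => by ring

lemma euclNorm_nonneg' {d : ℕ} (x : Fin d → ℝ) : 0 ≤ euclNorm x := Real.sqrt_nonneg _

lemma euclNorm_sq {d : ℕ} (x : Fin d → ℝ) : (euclNorm x)^2 = ∑ i, (x i)^2 :=
  Real.sq_sqrt (by positivity)

lemma euclNorm_smul {d : ℕ} (c : ℝ) (x : Fin d → ℝ) : euclNorm (c • x) = |c| * euclNorm x := by
  simp only [euclNorm, Pi.smul_apply, smul_eq_mul, mul_pow, ← Finset.mul_sum]
  rw [Real.sqrt_mul (sq_nonneg c), Real.sqrt_sq_eq_abs]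

lemma cs_vec {d : ℕ} (y x : Fin d → ℝ) : ∑ i, y i * x i ≤ euclNorm y * euclNorm x := by
  have h : (∑ i, y i * x i)^2 ≤ (euclNorm y * euclNorm x)^2 := by
    rw [mul_pow, euclNorm_sq, euclNorm_sq]
    exact Finset.sum_mul_sq_le_sq_mul_sq _ _ _
  have h2 : 0 ≤ euclNorm y * euclNorm x := mul_nonneg (euclNorm_nonneg' _) (euclNorm_nonneg' _)
  nlinarith [le_abs_self (∑ i, y i * x i), abs_nonneg (∑ i, y i * x i), sq_abs (∑ i, y i * x i)]

lemma euclNorm_mulVec_le {d : ℕ} (C : Matrix (Fin d) (Fin d) ℝ) (y : Fin d → ℝ) :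
    euclNorm (C.mulVec y) ≤ Real.sqrt (froSq C) * euclNorm y := by
  rw [euclNorm, euclNorm, ← Real.sqrt_mul (froSq_nonneg C)]
  apply Real.sqrt_le_sqrt
  simp only [Matrix.mulVec, dotProduct]
  calc ∑ i, (∑ k, C i k * y k)^2
      ≤ ∑ i, (∑ k, (C i k)^2) * (∑ k, (y k)^2) :=
        Finset.sum_le_sum fun i _ => Finset.sum_mul_sq_le_sq_mul_sq _ _ _
    _ = froSq C * ∑ k, (y k)^2 := by rw [froSq, Finset.sum_mul]

lemma matexp {d : ℕ} (M A B E1 E2 : Matrix (Fin d) (Fin d) ℝ) (t : ℝ) :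
    (A + t • E1) * (B + t • E2) - M
      = (A*B - M) + t • (A*E2 + E1*B) + (t^2) • (E1*E2) := by
  have : (t • E1) * (t • E2) = (t^2) • (E1*E2) := by
    rw [Matrix.smul_mul, Matrix.mul_smul, smul_smul]; ring_nf
  simp only [add_mul, mul_add, Matrix.smul_mul, Matrix.mul_smul, this, smul_add]
  abel

lemma froSq_poly {d : ℕ} (R S T : Matrix (Fin d) (Fin d) ℝ) (t : ℝ) :
    froSq (R + t • S + (t^2) • T)
      = froSq R + (2 * ip R S)*t + (froSq S + 2 * ip R T)*t^2
        + (2 * ip S T)*t^3 + froSq T * t^4 := by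
  simp only [froSq, ip, Matrix.add_apply, Matrix.smul_apply, smul_eq_mul]
  have key : ∀ i j : Fin d, (R i j + t * S i j + t^2 * T i j)^2
      = R i j^2 + (R i j * S i j)*(2*t) + (S i j^2)*t^2 + (R i j * T i j)*(2*t^2)
        + (S i j * T i j)*(2*t^3) + (T i j^2)*t^4 := fun i j => by ring
  calc (∑ i, ∑ j, (R i j + t * S i j + t^2 * T i j)^2)
      = ∑ i, ∑ j, (R i j^2 + (R i j * S i j)*(2*t) + (S i j^2)*t^2 + (R i j * T i j)*(2*t^2)
        + (S i j * T i j)*(2*t^3) + (T i j^2)*t^4) :=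
        Finset.sum_congr rfl fun i _ => Finset.sum_congr rfl fun j _ => key i j
    _ = _ := by simp only [Finset.sum_add_distrib, ← Finset.sum_mul]; ring

lemma hasDerivAt_quartic (c0 c1 c2 c3 c4 t : ℝ) :
    HasDerivAt (fun t : ℝ => c0 + c1*t + c2*t^2 + c3*t^3 + c4*t^4)
      (c1 + 2*c2*t + 3*c3*t^2 + 4*c4*t^3) t := by
  have h := ((((hasDerivAt_const t c0).add ((hasDerivAt_id t).const_mul c1)).add
      ((hasDerivAt_pow 2 t).const_mul c2)).add
      ((hasDerivAt_pow 3 t).const_mul c3)).add ((hasDerivAt_pow 4 t).const_mul c4)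
  convert h using 1
  · rfl
  · rfl
  · funext x; simp only [Pi.add_apply, id]
  · simp; ring

lemma hasDerivAt_cubic (c1 c2 c3 c4 t : ℝ) :
    HasDerivAt (fun t : ℝ => c1 + 2*c2*t + 3*c3*t^2 + 4*c4*t^3)
      (2*c2 + 6*c3*t + 12*c4*t^2) t := by
  have h := (((hasDerivAt_const t c1).add ((hasDerivAt_id t).const_mul (2*c2))).add
      ((hasDerivAt_pow 2 t).const_mul (3*c3))).add ((hasDerivAt_pow 3 t).const_mul (4*c4))
  convert h using 1
  · rfl
  · rfl
  · funext x; simp only [Pi.add_apply, id]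
  · simp; ring

lemma iteratedDeriv2_quartic (c0 c1 c2 c3 c4 : ℝ) :
    iteratedDeriv 2 (fun t : ℝ => c0 + c1*t + c2*t^2 + c3*t^3 + c4*t^4) 0 = 2*c2 := by
  rw [iteratedDeriv_succ, iteratedDeriv_one]
  have h1 : deriv (fun t : ℝ => c0 + c1*t + c2*t^2 + c3*t^3 + c4*t^4)
      = fun t : ℝ => c1 + 2*c2*t + 3*c3*t^2 + 4*c4*t^3 :=
    funext fun t => (hasDerivAt_quartic c0 c1 c2 c3 c4 t).deriv
  rw [h1, (hasDerivAt_cubic c1 c2 c3 c4 0).deriv]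
  ring

lemma hessQ_eq {d : ℕ} (M A B E1 E2 : Matrix (Fin d) (Fin d) ℝ) :
    hessQ M A B E1 E2 = 2 * froSq (A*E2 + E1*B) + 4 * ip (A*B - M) (E1*E2) := by
  have hfun : (fun t : ℝ => loss M (A + t • E1) (B + t • E2))
      = fun t : ℝ => froSq (A*B - M) + (2 * ip (A*B-M) (A*E2+E1*B))*t
          + (froSq (A*E2+E1*B) + 2 * ip (A*B-M) (E1*E2))*t^2
          + (2 * ip (A*E2+E1*B) (E1*E2))*t^3 + froSq (E1*E2) * t^4 := by
    funext t
    rw [loss, matexp, froSq_poly]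
  rw [hessQ, hfun, iteratedDeriv2_quartic]
  ring

lemma froSq_zero {d : ℕ} : froSq (0 : Matrix (Fin d) (Fin d) ℝ) = 0 := by simp [froSq]

lemma vecMul_dot {d : ℕ} (v x : Fin d → ℝ) (W : Matrix (Fin d) (Fin d) ℝ) :
    ∑ j, (Matrix.vecMul v W) j * x j = ∑ k, v k * (W.mulVec x) k := by
  simp only [Matrix.vecMul, Matrix.mulVec, dotProduct, Finset.sum_mul, Finset.mul_sum]
  rw [Finset.sum_comm]
  exact Finset.sum_congr rfl fun k _ => Finset.sum_congr rfl fun j _ => by ring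

set_option maxHeartbeats 2000000 in
/-- Ill-conditioning under scaling: if `W1` is invertible and the Hessian of ℓ at the
scaled point `(a⁻¹ W1, a W2)` is positive definite, then its condition number satisfies
`λ_max / λ_min ≥ a⁴ σ_max(W2)² / σ_min(W1)²`. -/
theorem condition_number_scaling (d : ℕ) (hd : 0 < d)
    (M W1 W2 : Matrix (Fin d) (Fin d) ℝ) (a : ℝ) (ha : 0 < a)
    (hW1 : IsUnit W1)
    (hpd : 0 < lamMin M (a⁻¹ • W1) (a • W2)) :
    a ^ 4 * sigmaMax W2 ^ 2 / sigmaMin W1 ^ 2 ≤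
      lamMax M (a⁻¹ • W1) (a • W2) / lamMin M (a⁻¹ • W1) (a • W2) := by
  set A := a⁻¹ • W1 with hA
  set B := a • W2 with hB
  have ha' : a ≠ 0 := ha.ne'
  -- unit basis vector
  set i0 : Fin d := ⟨0, hd⟩ with hi0
  set x0 : Fin d → ℝ := Pi.single i0 1 with hx0
  have hx0sq : ∑ i, (x0 i)^2 = 1 := by
    simp [hx0, Pi.single_apply]
  have hx0norm : euclNorm x0 = 1 := by rw [euclNorm, hx0sq, Real.sqrt_one]
  -- the Hessian Rayleigh set
  set HS := {q : ℝ | ∃ E1 E2 : Matrix (Fin d) (Fin d) ℝ,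
    froSq E1 + froSq E2 = 1 ∧ q = hessQ M A B E1 E2} with hHS
  have hlmin : lamMin M A B = sInf HS := rfl
  have hlmax : lamMax M A B = sSup HS := rfl
  -- global bound on the sphere
  set C : ℝ := 4*froSq A + 4*froSq B + 2*froSq (A*B - M) + 2 with hC
  have hbound : ∀ q ∈ HS, |q| ≤ C := by
    rintro q ⟨E1, E2, hE, rfl⟩
    have h1 := froSq_nonneg E1; have h2 := froSq_nonneg E2
    have hE1 : froSq E1 ≤ 1 := by linarith
    have hE2 : froSq E2 ≤ 1 := by linarith
    rw [hessQ_eq]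
    have hS := froSq_add_le (A*E2) (E1*B)
    have hS1 := froSq_mul_le A E2
    have hS2 := froSq_mul_le E1 B
    have hT := froSq_mul_le E1 E2
    have hI := abs_ip_le (A*B - M) (E1*E2)
    have hRnn := froSq_nonneg (A*B-M)
    have hTnn := froSq_nonneg (E1*E2)
    have hSnn := froSq_nonneg (A*E2 + E1*B)
    have hAnn := froSq_nonneg A
    have hBnn := froSq_nonneg B
    have hle := le_abs_self (ip (A*B-M) (E1*E2))
    have hge := neg_abs_le (ip (A*B-M) (E1*E2))
    have p1 : froSq E1 * froSq E2 ≤ 1 := mul_le_one₀ hE1 h2 hE2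
    have p2 : froSq A * froSq E2 ≤ froSq A := by nlinarith
    have p3 : froSq E1 * froSq B ≤ froSq B := by nlinarith
    rw [abs_le]
    constructor
    · nlinarith
    · nlinarith
  have hBA : BddAbove HS := ⟨C, fun q hq => (abs_le.mp (hbound q hq)).2⟩
  have hBB : BddBelow HS := ⟨-C, fun q hq => (abs_le.mp (hbound q hq)).1⟩
  -- hessQ in pure directions
  have hq2 : ∀ x : Fin d → ℝ, hessQ M A B 0 (outerM x x0)
      = 2 * a⁻¹^2 * (∑ i, ((W1.mulVec x) i)^2) := by
    intro x
    rw [hessQ_eq]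
    simp only [Matrix.zero_mul, Matrix.mul_zero, ip_zero, add_zero, mul_zero, mul_outer]
    have : A.mulVec x = a⁻¹ • W1.mulVec x := by rw [hA, Matrix.smul_mulVec]
    rw [this, froSq_outer, hx0sq, mul_one]
    have : ∑ i, ((a⁻¹ • W1.mulVec x) i)^2 = a⁻¹^2 * ∑ i, ((W1.mulVec x) i)^2 := by
      simp [mul_pow, Finset.mul_sum]
    rw [this]; ring
  have hq1 : ∀ v : Fin d → ℝ, hessQ M A B (outerM x0 v) 0
      = 2 * a^2 * (∑ j, ((Matrix.vecMul v W2) j)^2) := by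
    intro v
    rw [hessQ_eq]
    simp only [Matrix.mul_zero, ip_zero, mul_zero, add_zero, zero_add]
    rw [hB, Matrix.mul_smul, froSq_smul, outer_mul, froSq_outer, hx0sq, one_mul]
    ring
  -- memberships
  have mem2 : ∀ x : Fin d → ℝ, (∑ i, (x i)^2 = 1) → hessQ M A B 0 (outerM x x0) ∈ HS :=
    fun x hx => ⟨0, outerM x x0, by simp [froSq_outer, hx, hx0sq, froSq_zero], rfl⟩
  have mem1 : ∀ v : Fin d → ℝ, (∑ i, (v i)^2 = 1) → hessQ M A B (outerM x0 v) 0 ∈ HS :=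
    fun v hv => ⟨outerM x0 v, 0, by simp [froSq_outer, hv, hx0sq, froSq_zero], rfl⟩
  -- sigmaMin W1 facts
  set SN1 := {y : ℝ | ∃ x : Fin d → ℝ, euclNorm x = 1 ∧ y = euclNorm (W1.mulVec x)} with hSN1
  have hsmin : sigmaMin W1 = sInf SN1 := rfl
  have hne1 : SN1.Nonempty := ⟨euclNorm (W1.mulVec x0), x0, hx0norm, rfl⟩
  have hBB1 : BddBelow SN1 := ⟨0, by rintro y ⟨x, hx, rfl⟩; exact euclNorm_nonneg' _⟩
  have hdet : IsUnit W1.det := (Matrix.isUnit_iff_isUnit_det W1).mp hW1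
  set F : ℝ := Real.sqrt (froSq W1⁻¹) with hFdef
  have hFe : ∀ x : Fin d → ℝ, euclNorm x = 1 → 1 ≤ F * euclNorm (W1.mulVec x) := by
    intro x hx
    have hx' : (W1⁻¹).mulVec (W1.mulVec x) = x := by
      rw [Matrix.mulVec_mulVec, Matrix.nonsing_inv_mul W1 hdet, Matrix.one_mulVec]
    calc (1:ℝ) = euclNorm x := hx.symm
      _ = euclNorm ((W1⁻¹).mulVec (W1.mulVec x)) := by rw [hx']
      _ ≤ F * euclNorm (W1.mulVec x) := euclNorm_mulVec_le _ _
  have hF : 0 < F := by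
    by_contra h
    push_neg at h
    have h1 := hFe x0 hx0norm
    have h2 := euclNorm_nonneg' (W1.mulVec x0)
    nlinarith
  have hsF : ∀ y ∈ SN1, F⁻¹ ≤ y := by
    rintro y ⟨x, hx, rfl⟩
    have h1 := hFe x hx
    have h2 : F⁻¹ * 1 ≤ F⁻¹ * (F * euclNorm (W1.mulVec x)) :=
      mul_le_mul_of_nonneg_left h1 (inv_nonneg.mpr hF.le)
    rwa [mul_one, ← mul_assoc, inv_mul_cancel₀ hF.ne', one_mul] at h2
  have hs_pos : 0 < sigmaMin W1 := lt_of_lt_of_le (inv_pos.mpr hF) (le_csInf hne1 hsF)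
  -- lamMin upper bound
  have hlm_le : lamMin M A B ≤ 2 * a⁻¹^2 * (sigmaMin W1)^2 := by
    by_contra h
    push_neg at h
    set c : ℝ := Real.sqrt (lamMin M A B * a^2 / 2) with hcdef
    have hlm_pos := hpd
    have hc2 : c^2 = lamMin M A B * a^2 / 2 := Real.sq_sqrt (by positivity)
    have hinv : a⁻¹^2 * a^2 = 1 := by field_simp
    have hs2 : (sigmaMin W1)^2 < c^2 := by
      rw [hc2]
      have key : (sigmaMin W1)^2 = (a^2/2) * (2 * a⁻¹^2 * (sigmaMin W1)^2) := by
        field_simp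
      calc (sigmaMin W1)^2 = (a^2/2) * (2 * a⁻¹^2 * (sigmaMin W1)^2) := key
        _ < (a^2/2) * lamMin M A B := by
            exact mul_lt_mul_of_pos_left h (by positivity)
        _ = lamMin M A B * a^2/2 := by ring
    have hsc : sigmaMin W1 < c := lt_of_pow_lt_pow_left₀ 2 (Real.sqrt_nonneg _) hs2
    rw [hsmin] at hsc
    obtain ⟨y, ⟨x, hx, rfl⟩, hyc⟩ := exists_lt_of_csInf_lt hne1 hsc
    have hxsq : ∑ i, (x i)^2 = 1 := by rw [← euclNorm_sq, hx]; norm_num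
    have hle := csInf_le hBB (mem2 x hxsq)
    rw [hq2 x, ← hlmin] at hle
    have hy2 : (euclNorm (W1.mulVec x))^2 < c^2 :=
      pow_lt_pow_left₀ hyc (euclNorm_nonneg' _) two_ne_zero
    rw [euclNorm_sq] at hy2
    have h1 : 2*a⁻¹^2*(∑ i, ((W1.mulVec x) i)^2) < 2*a⁻¹^2*c^2 :=
      mul_lt_mul_of_pos_left hy2 (by positivity)
    have h2 : 2*a⁻¹^2*c^2 = lamMin M A B := by
      rw [hc2]; field_simp
    linarith only [hle, h1, h2]
  -- lamMax lower bound pointwise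
  have hlM_ge : ∀ x : Fin d → ℝ, euclNorm x = 1 →
      2 * a^2 * (euclNorm (W2.mulVec x))^2 ≤ lamMax M A B := by
    intro x hx
    have hm0 : 0 ≤ euclNorm (W2.mulVec x) := euclNorm_nonneg' _
    rcases eq_or_lt_of_le hm0 with hm | hm
    · have hmem := mem1 x0 hx0sq
      have hle := le_csSup hBA hmem
      rw [hq1 x0, ← hlmax] at hle
      have : (0:ℝ) ≤ 2 * a^2 * ∑ j, ((Matrix.vecMul x0 W2) j)^2 := by positivity
      rw [← hm]
      simpa using le_trans this hle
    · set m := euclNorm (W2.mulVec x) with hmdef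
      set v : Fin d → ℝ := m⁻¹ • (W2.mulVec x) with hvdef
      have hsum2 : ∑ k, ((W2.mulVec x) k)^2 = m^2 := (euclNorm_sq _).symm ▸ (euclNorm_sq (W2.mulVec x)).symm
      have hv : ∑ i, (v i)^2 = 1 := by
        have : ∑ i, (v i)^2 = m⁻¹^2 * ∑ k, ((W2.mulVec x) k)^2 := by
          simp [hvdef, mul_pow, Finset.mul_sum]
        rw [this, hsum2]
        field_simp
      have hle := le_csSup hBA (mem1 v hv)
      rw [hq1 v, ← hlmax] at hle
      have hkey : m ≤ euclNorm (Matrix.vecMul v W2) := by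
        have hsum : ∑ j, (Matrix.vecMul v W2) j * x j = m := by
          rw [vecMul_dot]
          have : ∑ k, v k * (W2.mulVec x) k = m⁻¹ * ∑ k, ((W2.mulVec x) k)^2 := by
            rw [Finset.mul_sum]
            exact Finset.sum_congr rfl fun k _ => by simp [hvdef]; ring
          rw [this, hsum2]
          field_simp
        calc m = ∑ j, (Matrix.vecMul v W2) j * x j := hsum.symm
          _ ≤ euclNorm (Matrix.vecMul v W2) * euclNorm x := cs_vec _ _
          _ = euclNorm (Matrix.vecMul v W2) := by rw [hx, mul_one]
      have hm2 : m^2 ≤ (euclNorm (Matrix.vecMul v W2))^2 := pow_le_pow_left₀ hm0 hkey 2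
      simp only [euclNorm_sq] at hm2
      have h4 : 2*a^2*m^2 ≤ 2*a^2*(∑ j, ((Matrix.vecMul v W2) j)^2) :=
        mul_le_mul_of_nonneg_left hm2 (by positivity)
      linarith only [h4, hle]
  -- sigmaMax facts
  set SN2 := {y : ℝ | ∃ x : Fin d → ℝ, euclNorm x = 1 ∧ y = euclNorm (W2.mulVec x)} with hSN2
  have hsmax : sigmaMax W2 = sSup SN2 := rfl
  have hne2 : SN2.Nonempty := ⟨euclNorm (W2.mulVec x0), x0, hx0norm, rfl⟩
  have hBA2 : BddAbove SN2 := by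
    refine ⟨Real.sqrt (froSq W2), ?_⟩
    rintro y ⟨x, hx, rfl⟩
    have := euclNorm_mulVec_le W2 x
    rwa [hx, mul_one] at this
  have hσ0 : 0 ≤ sigmaMax W2 :=
    le_trans (euclNorm_nonneg' (W2.mulVec x0)) (le_csSup hBA2 ⟨x0, hx0norm, rfl⟩)
  -- lamMax lower bound
  have hlM_final : 2 * a^2 * (sigmaMax W2)^2 ≤ lamMax M A B := by
    by_contra h
    push_neg at h
    have hlM0 : 0 ≤ lamMax M A B :=
      le_trans (by positivity) (hlM_ge x0 hx0norm)
    set c : ℝ := Real.sqrt (lamMax M A B / (2*a^2)) with hcdef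
    have hc2 : c^2 = lamMax M A B / (2*a^2) := Real.sq_sqrt (by positivity)
    have hc0 : 0 ≤ c := Real.sqrt_nonneg _
    have hcσ : c < sigmaMax W2 := by
      refine lt_of_pow_lt_pow_left₀ 2 hσ0 ?_
      rw [hc2]
      rw [div_lt_iff₀ (by positivity)]
      nlinarith
    rw [hsmax] at hcσ
    obtain ⟨y, ⟨x, hx, rfl⟩, hcy⟩ := exists_lt_of_lt_csSup hne2 hcσ
    have := hlM_ge x hx
    have hy2 : c^2 < (euclNorm (W2.mulVec x))^2 := pow_lt_pow_left₀ hcy hc0 two_ne_zero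
    rw [hc2, div_lt_iff₀ (by positivity)] at hy2
    nlinarith
  -- assemble
  have hlm_pos := hpd
  have hD : (0:ℝ) < 2 * a⁻¹^2 * (sigmaMin W1)^2 := by positivity
  have e2 : (2*a^2*(sigmaMax W2)^2) / (2*a⁻¹^2*(sigmaMin W1)^2)
      ≤ (2*a^2*(sigmaMax W2)^2) / lamMin M A B := by
    apply div_le_div_of_nonneg_left (by positivity) hlm_pos hlm_le
  have e1 : a^4 * (sigmaMax W2)^2 / (sigmaMin W1)^2
      = (2*a^2*(sigmaMax W2)^2) / (2*a⁻¹^2*(sigmaMin W1)^2) := by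
    field_simp
  have e3 : (2*a^2*(sigmaMax W2)^2) / lamMin M A B ≤ lamMax M A B / lamMin M A B :=
    (div_le_div_iff_of_pos_right hlm_pos).mpr hlM_final
  calc a^4 * (sigmaMax W2)^2 / (sigmaMin W1)^2
      = (2*a^2*(sigmaMax W2)^2) / (2*a⁻¹^2*(sigmaMin W1)^2) := e1
    _ ≤ (2*a^2*(sigmaMax W2)^2) / lamMin M A B := e2
    _ ≤ lamMax M A B / lamMin M A B := e3
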